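/- Let L be the discrete Neumann Laplacian on ℝⁿ (n ≥ 2) and define L⁻¹ on the orthogonal complement of constants by L⁻¹ f = Σ_{i≥2} (1/λ^i)⟨f, ψ^i⟩ ψ^i, where λ^i = −4n² sin²((i−1)π/(2n)) and ψ^i is the orthonormal DCT basis. Then the operator norm of G ∘ L⁻¹ (from ℝⁿ with Euclidean norm to ℝ^{n−1} with Euclidean norm) is at most 1/4, provided n > 1. -/

import Mathlib

open Finset Real



/-- Discrete Neumann Laplacian on `ℝⁿ` with mesh `Δ = 1/n`:
`(L u)_1 = (u_2 - u_1)/Δ²`, `(L u)_j = (u_{j-1} - 2u_j + u_{j+1})/Δ²` in the interior,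
`(L u)_n = (u_{n-1} - u_n)/Δ²`. (0-based indexing.) -/
def dLap (n : ℕ) (u : Fin n → ℝ) : Fin n → ℝ := fun j =>
  (n : ℝ) ^ 2 *
    ((if h : (j : ℕ) + 1 < n then u ⟨(j : ℕ) + 1, h⟩ else u j)
      - 2 * u j
      + (if 0 < (j : ℕ) then u ⟨(j : ℕ) - 1, by omega⟩ else u j))

/-- Discrete divergence `D : ℝ^{n-1} → ℝⁿ` with zero-flux boundary:
`(D m)_1 = m_1/Δ`, `(D m)_j = (m_j - m_{j-1})/Δ`, `(D m)_n = -m_{n-1}/Δ`. -/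
def dDiv (n : ℕ) (m : Fin (n - 1) → ℝ) : Fin n → ℝ := fun j =>
  (n : ℝ) *
    ((if h : (j : ℕ) < n - 1 then m ⟨(j : ℕ), h⟩ else 0)
      - (if h : 0 < (j : ℕ) then m ⟨(j : ℕ) - 1, by omega⟩ else 0))

/-- Discrete gradient `G : ℝⁿ → ℝ^{n-1}`: `(G φ)_j = (φ_{j+1} - φ_j)/Δ`. -/
def dGrad (n : ℕ) (φ : Fin n → ℝ) : Fin (n - 1) → ℝ := fun j =>
  (n : ℝ) * (φ ⟨(j : ℕ) + 1, by omega⟩ - φ ⟨(j : ℕ), by omega⟩)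

/-- Eigenvalues of the discrete Neumann Laplacian (1-based `i` given as `i ∈ Fin n`,
so `λ^{i+1} = -4 n² sin²(i π / (2n))`). -/
noncomputable def dLam (n : ℕ) (i : Fin n) : ℝ :=
  -4 * (n : ℝ) ^ 2 * Real.sin ((i : ℝ) * Real.pi / (2 * n)) ^ 2

/-- Orthonormal DCT-II eigenbasis of the discrete Neumann Laplacian. -/
noncomputable def dPsi (n : ℕ) (i j : Fin n) : ℝ :=
  Real.sqrt ((1 + if (i : ℕ) = 0 then (1 : ℝ) else 0) / n) *
    Real.cos (((j : ℝ) + 1 / 2) * ((i : ℝ) * Real.pi / n))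

/-- Pseudoinverse of the discrete Neumann Laplacian on the orthogonal complement of
constants, defined spectrally. -/
noncomputable def dLapInv (n : ℕ) (f : Fin n → ℝ) : Fin n → ℝ := fun j =>
  ∑ i ∈ Finset.univ.filter (fun i : Fin n => (i : ℕ) ≠ 0),
    (1 / dLam n i) * (∑ k, f k * dPsi n i k) * dPsi n i j


lemma tele_cos (θ : ℝ) (N : ℕ) :
    (2 * Real.sin θ) * ∑ j ∈ Finset.range N, Real.cos ((2*(j:ℝ)+1)*θ)
      = Real.sin (2*(N:ℝ)*θ) := by
  have h := Finset.sum_range_sub (fun j : ℕ => Real.sin (2*(j:ℝ)*θ)) N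
  simp only [Nat.cast_zero, zero_mul, mul_zero, Real.sin_zero, sub_zero] at h
  rw [Finset.mul_sum, ← h]
  apply Finset.sum_congr rfl
  intro j _
  have := Real.sin_sub_sin (2*((j:ℝ)+1)*θ) (2*(j:ℝ)*θ)
  have e1 : (2*((j:ℝ)+1)*θ - 2*(j:ℝ)*θ)/2 = θ := by ring
  have e2 : (2*((j:ℝ)+1)*θ + 2*(j:ℝ)*θ)/2 = (2*(j:ℝ)+1)*θ := by ring
  rw [e1, e2] at this
  push_cast
  linarith

lemma sum_cos_zero {θ : ℝ} {N : ℕ} (h : Real.sin θ ≠ 0) (h2 : Real.sin (2*(N:ℝ)*θ) = 0) :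
    ∑ j ∈ Finset.range N, Real.cos ((2*(j:ℝ)+1)*θ) = 0 := by
  have := tele_cos θ N
  rw [h2] at this
  have h2s : (2 : ℝ) * Real.sin θ ≠ 0 := by positivity
  exact (mul_eq_zero.mp this).resolve_left h2s

lemma cos_key (x α : ℝ) :
    Real.cos (x+α) - 2*Real.cos x + Real.cos (x-α) = -(4*Real.sin (α/2)^2) * Real.cos x := by
  have h1 : Real.cos (x+α) + Real.cos (x-α) = 2*Real.cos x*Real.cos α := by
    rw [Real.cos_add, Real.cos_sub]; ring
  have h2 : Real.cos α = 1 - 2*Real.sin (α/2)^2 := by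
    have hc := Real.cos_two_mul (α/2)
    have h' : 2*(α/2) = α := by ring
    rw [h'] at hc
    have := Real.sin_sq_add_cos_sq (α/2)
    linarith
  linear_combination h1 + 2*Real.cos x * h2

lemma S_nat (n m : ℕ) (hn : 0 < n) (h1 : 0 < m) (h2 : m < 2*n) :
    ∑ k ∈ Finset.range n, Real.cos ((2*(k:ℝ)+1)*((m:ℝ)*Real.pi/(2*n))) = 0 := by
  apply sum_cos_zero
  · have hθ1 : 0 < (m:ℝ)*Real.pi/(2*n) := by positivity
    have hθ2 : (m:ℝ)*Real.pi/(2*n) < Real.pi := by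
      rw [div_lt_iff₀ (by positivity)]
      have : (m:ℝ) < 2*n := by exact_mod_cast h2
      nlinarith [Real.pi_pos]
    exact ne_of_gt (Real.sin_pos_of_pos_of_lt_pi hθ1 hθ2)
  · have hne : (n:ℝ) ≠ 0 := by positivity
    have : 2*(n:ℝ)*((m:ℝ)*Real.pi/(2*n)) = (m:ℝ)*Real.pi := by
      field_simp
    rw [this]; exact Real.sin_nat_mul_pi m

lemma S_eval (n : ℕ) (hn : 0 < n) (c : ℝ) (m : ℕ) (hc : c = (m:ℝ) ∨ c = -(m:ℝ))
    (h1 : 0 < m) (h2 : m < 2*n) :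
    ∑ k ∈ Finset.range n, Real.cos ((2*(k:ℝ)+1)*(c*Real.pi/(2*n))) = 0 := by
  rcases hc with rfl | rfl
  · exact S_nat n m hn h1 h2
  · rw [← S_nat n m hn h1 h2]
    apply Finset.sum_congr rfl
    intro k _
    rw [show (2*(k:ℝ)+1)*((-(m:ℝ))*Real.pi/(2*n)) = -((2*(k:ℝ)+1)*((m:ℝ)*Real.pi/(2*n))) by ring,
      Real.cos_neg]

lemma ortho_cos (n i i' : ℕ) (hn : 0 < n) (hi : i < n) (hi' : i' < n) :
    ∑ k ∈ Finset.range n,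
        Real.cos (((k:ℝ)+1/2)*((i:ℝ)*Real.pi/n)) * Real.cos (((k:ℝ)+1/2)*((i':ℝ)*Real.pi/n))
      = if i = i' then (if i = 0 then (n:ℝ) else (n:ℝ)/2) else 0 := by
  have hne : (n:ℝ) ≠ 0 := by positivity
  have hstep : ∀ k : ℕ,
      Real.cos (((k:ℝ)+1/2)*((i:ℝ)*Real.pi/n)) * Real.cos (((k:ℝ)+1/2)*((i':ℝ)*Real.pi/n))
        = (Real.cos ((2*(k:ℝ)+1)*(((i:ℝ)+(i':ℝ))*Real.pi/(2*n)))
            + Real.cos ((2*(k:ℝ)+1)*(((i:ℝ)-(i':ℝ))*Real.pi/(2*n))))/2 := by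
    intro k
    have hA : ((k:ℝ)+1/2)*((i:ℝ)*Real.pi/n) = (2*(k:ℝ)+1)*((i:ℝ)*Real.pi/(2*n)) := by
      field_simp
      try ring
      try exact Or.inl trivial
    have hB : ((k:ℝ)+1/2)*((i':ℝ)*Real.pi/n) = (2*(k:ℝ)+1)*((i':ℝ)*Real.pi/(2*n)) := by
      field_simp
      try ring
      try exact Or.inl trivial
    rw [hA, hB]
    have := Real.cos_add ((2*(k:ℝ)+1)*((i:ℝ)*Real.pi/(2*n))) ((2*(k:ℝ)+1)*((i':ℝ)*Real.pi/(2*n)))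
    have h2 := Real.cos_sub ((2*(k:ℝ)+1)*((i:ℝ)*Real.pi/(2*n))) ((2*(k:ℝ)+1)*((i':ℝ)*Real.pi/(2*n)))
    rw [show (2*(k:ℝ)+1)*(((i:ℝ)+(i':ℝ))*Real.pi/(2*n))
        = (2*(k:ℝ)+1)*((i:ℝ)*Real.pi/(2*n)) + (2*(k:ℝ)+1)*((i':ℝ)*Real.pi/(2*n)) by ring,
      show (2*(k:ℝ)+1)*(((i:ℝ)-(i':ℝ))*Real.pi/(2*n))
        = (2*(k:ℝ)+1)*((i:ℝ)*Real.pi/(2*n)) - (2*(k:ℝ)+1)*((i':ℝ)*Real.pi/(2*n)) by ring,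
      this, h2]
    ring
  rw [Finset.sum_congr rfl (fun k _ => hstep k)]
  rw [← Finset.sum_div, Finset.sum_add_distrib]
  by_cases hii : i = i'
  · subst hii
    have hm : ∀ k : ℕ, Real.cos ((2*(k:ℝ)+1)*(((i:ℝ)-(i:ℝ))*Real.pi/(2*n))) = 1 := by
      intro k; simp
    rw [Finset.sum_congr rfl (fun k _ => hm k), Finset.sum_const, Finset.card_range]
    by_cases hi0 : i = 0
    · subst hi0
      simp
    · have hp : ∑ k ∈ Finset.range n,
          Real.cos ((2*(k:ℝ)+1)*(((i:ℝ)+(i:ℝ))*Real.pi/(2*n))) = 0 := by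
        apply S_eval n hn _ (2*i) (Or.inl (by push_cast; ring)) (by omega) (by omega)
      rw [hp]
      simp [hi0]
  · have hp : ∑ k ∈ Finset.range n,
        Real.cos ((2*(k:ℝ)+1)*(((i:ℝ)+(i':ℝ))*Real.pi/(2*n))) = 0 := by
      apply S_eval n hn _ (i+i') (Or.inl (by push_cast; ring)) (by omega) (by omega)
    have hm : ∑ k ∈ Finset.range n,
        Real.cos ((2*(k:ℝ)+1)*(((i:ℝ)-(i':ℝ))*Real.pi/(2*n))) = 0 := by
      rcases lt_or_gt_of_ne (fun h : i = i' => hii h) with h | h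
      · apply S_eval n hn _ (i'-i) (Or.inr ?_) (by omega) (by omega)
        have : ((i'-i:ℕ):ℝ) = (i':ℝ) - i := by
          push_cast [Nat.cast_sub (le_of_lt h)]; ring
        rw [this]; ring
      · apply S_eval n hn _ (i-i') (Or.inl ?_) (by omega) (by omega)
        have : ((i-i':ℕ):ℝ) = (i:ℝ) - i' := by
          push_cast [Nat.cast_sub (le_of_lt h)]; ring
        rw [this]
    rw [hp, hm]
    simp [hii]

lemma dPsi_ortho (n : ℕ) (hn : 0 < n) (i i' : Fin n) (hi : (i:ℕ) ≠ 0) (hi' : (i':ℕ) ≠ 0) :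
    ∑ k : Fin n, dPsi n i k * dPsi n i' k = if i = i' then (1/2 : ℝ) else 0 := by
  have hne : (n:ℝ) ≠ 0 := by positivity
  have hsq : Real.sqrt ((1 + if (i:ℕ) = 0 then (1:ℝ) else 0) / n)
      * Real.sqrt ((1 + if (i':ℕ) = 0 then (1:ℝ) else 0) / n) = 1/n := by
    rw [if_neg hi, if_neg hi']
    rw [← Real.sqrt_mul (by positivity)]
    rw [show (1+(0:ℝ))/n * ((1+0)/n) = (1/n)^2 by ring]
    rw [Real.sqrt_sq (by positivity)]
  have hterm : ∀ k : Fin n, dPsi n i k * dPsi n i' k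
      = (1/(n:ℝ)) * (Real.cos (((k:ℝ)+1/2)*((i:ℝ)*Real.pi/n))
          * Real.cos (((k:ℝ)+1/2)*((i':ℝ)*Real.pi/n))) := by
    intro k
    unfold dPsi
    rw [← hsq]; ring
  rw [Finset.sum_congr rfl (fun k _ => hterm k), ← Finset.mul_sum]
  rw [Fin.sum_univ_eq_sum_range (fun k =>
      Real.cos (((k:ℝ)+1/2)*((i:ℝ)*Real.pi/n)) * Real.cos (((k:ℝ)+1/2)*((i':ℝ)*Real.pi/n))) n]
  rw [ortho_cos n i i' hn i.isLt i'.isLt]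
  by_cases h : (i:ℕ) = (i':ℕ)
  · have : i = i' := Fin.ext h
    rw [if_pos h, if_pos this, if_neg hi]
    field_simp
  · have : i ≠ i' := fun hh => h (congrArg Fin.val hh)
    rw [if_neg h, if_neg this, mul_zero]

lemma dLap_dPsi (n : ℕ) (hn : 1 < n) (i : Fin n) (j : Fin n) :
    dLap n (dPsi n i) j = dLam n i * dPsi n i j := by
  have hn0 : 0 < n := by omega
  have hne : (n:ℝ) ≠ 0 := by positivity
  set c := Real.sqrt ((1 + if (i : ℕ) = 0 then (1 : ℝ) else 0) / n) with hc
  set α := (i:ℝ)*Real.pi/n with hα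
  have hsin : Real.sin ((i:ℝ)*Real.pi) = 0 := by exact_mod_cast Real.sin_nat_mul_pi (i:ℕ)
  have hcos_symm : ∀ y:ℝ, Real.cos ((i:ℝ)*Real.pi + y) = Real.cos ((i:ℝ)*Real.pi - y) := by
    intro y; rw [Real.cos_add, Real.cos_sub, hsin]; ring
  have hpsi : ∀ k : Fin n, dPsi n i k = c * Real.cos (((k:ℝ)+1/2)*α) := by
    intro k; rfl
  have hnext : (if h : (j:ℕ)+1 < n then dPsi n i ⟨(j:ℕ)+1, h⟩ else dPsi n i j)
      = c * Real.cos (((j:ℝ)+1/2)*α + α) := by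
    split_ifs with h
    · rw [hpsi]
      congr 1
      have : ((⟨(j:ℕ)+1, h⟩ : Fin n) : ℝ) = (j:ℝ)+1 := by push_cast; rfl
      rw [this]; ring
    · have hj : (j:ℕ) = n - 1 := by omega
      have hjr : (j:ℝ) = (n:ℝ) - 1 := by
        rw [show ((j:ℕ):ℝ) = ((n-1:ℕ):ℝ) by rw [hj]]
        push_cast [Nat.cast_sub (by omega : 1 ≤ n)]; ring
      rw [hpsi]
      congr 1
      have e1 : ((j:ℝ)+1/2)*α + α = (i:ℝ)*Real.pi + (i:ℝ)*Real.pi/(2*n) := by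
        rw [hα, hjr]; field_simp; ring
      have e2 : ((j:ℝ)+1/2)*α = (i:ℝ)*Real.pi - (i:ℝ)*Real.pi/(2*n) := by
        rw [hα, hjr]; field_simp; ring
      rw [e1, e2, hcos_symm]
  have hprev : (if 0 < (j:ℕ) then dPsi n i ⟨(j:ℕ)-1, by omega⟩ else dPsi n i j)
      = c * Real.cos (((j:ℝ)+1/2)*α - α) := by
    split_ifs with h
    · rw [hpsi]
      congr 1
      have : ((⟨(j:ℕ)-1, by omega⟩ : Fin n) : ℝ) = (j:ℝ)-1 := by
        simp only []
        push_cast [Nat.cast_sub (by omega : 1 ≤ (j:ℕ))]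
        ring
      rw [this]; ring
    · have hj : (j:ℕ) = 0 := by omega
      have hjr : (j:ℝ) = 0 := by exact_mod_cast congrArg (Nat.cast : ℕ → ℝ) hj
      rw [hpsi]
      congr 1
      rw [hjr]
      rw [show (0+(1:ℝ)/2)*α - α = -((0+(1:ℝ)/2)*α) by ring, Real.cos_neg]
  unfold dLap
  rw [hnext, hprev, hpsi j]
  have hkey := cos_key (((j:ℝ)+1/2)*α) α
  have hhalf : α/2 = (i:ℝ)*Real.pi/(2*n) := by rw [hα]; ring
  unfold dLam
  rw [← hhalf]
  linear_combination ((n:ℝ)^2*c) * hkey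

lemma parts (n : ℕ) (hn : 1 < n) (φ : Fin n → ℝ) :
    ∑ j : Fin (n-1), (dGrad n φ j)^2 = - ∑ j : Fin n, dLap n φ j * φ j := by
  obtain ⟨m, rfl⟩ : ∃ m, n = m + 1 := ⟨n - 1, by omega⟩
  set ψ : ℕ → ℝ := fun j => if h : j < m+1 then φ ⟨j, h⟩ else 0 with hψdef
  have hψ : ∀ (k : ℕ) (h : k < m+1), ψ k = φ ⟨k, h⟩ := fun k h => dif_pos h
  set N : ℕ → ℝ := fun j => if j+1 < m+1 then ψ (j+1) else ψ j with hN
  set P : ℕ → ℝ := fun j => if 0 < j then ψ (j-1) else ψ j with hP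
  have hG : ∑ j : Fin (m+1-1), (dGrad (m+1) φ j)^2
      = ∑ j ∈ Finset.range m, (((m:ℝ)+1)*(ψ (j+1) - ψ j))^2 := by
    rw [← Fin.sum_univ_eq_sum_range (fun j => (((m:ℝ)+1)*(ψ (j+1) - ψ j))^2) m]
    apply Finset.sum_congr rfl
    intro j _
    unfold dGrad
    rw [hψ ((j:ℕ)+1) (by omega), hψ (j:ℕ) (by omega)]
    push_cast
    ring
  have hL : ∑ j : Fin (m+1), dLap (m+1) φ j * φ j
      = ∑ j ∈ Finset.range (m+1), ((m:ℝ)+1)^2 * (N j - 2*ψ j + P j) * ψ j := by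
    rw [← Fin.sum_univ_eq_sum_range (fun j => ((m:ℝ)+1)^2 * (N j - 2*ψ j + P j) * ψ j) (m+1)]
    apply Finset.sum_congr rfl
    intro j _
    unfold dLap
    have h1 : (if h : (j:ℕ)+1 < m+1 then φ ⟨(j:ℕ)+1, h⟩ else φ j) = N (j:ℕ) := by
      simp only [hN]
      split_ifs with h
      · exact (hψ _ h).symm
      · exact (hψ _ j.isLt).symm
    have h2 : (if 0 < (j:ℕ) then φ ⟨(j:ℕ)-1, by omega⟩ else φ j) = P (j:ℕ) := by
      simp only [hP]
      split_ifs with h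
      · exact (hψ _ (by omega)).symm
      · exact (hψ _ j.isLt).symm
    have h3 : φ j = ψ (j:ℕ) := (hψ _ j.isLt).symm
    rw [h1, h2, h3]
    push_cast
    ring
  rw [hG, hL]
  have e1 : ∑ j ∈ Finset.range (m+1), N j * ψ j
      = (∑ j ∈ Finset.range m, ψ (j+1) * ψ j) + ψ m * ψ m := by
    rw [Finset.sum_range_succ]
    congr 1
    · apply Finset.sum_congr rfl
      intro j hj
      have hjm := Finset.mem_range.mp hj
      simp only [hN]
      rw [if_pos (by omega)]
    · simp only [hN]
      rw [if_neg (by omega)]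
  have e2 : ∑ j ∈ Finset.range (m+1), P j * ψ j
      = (∑ j ∈ Finset.range m, ψ j * ψ (j+1)) + ψ 0 * ψ 0 := by
    rw [Finset.sum_range_succ' (fun j => P j * ψ j) m]
    congr 1
  have e3 : ∑ j ∈ Finset.range (m+1), ψ j * ψ j
      = (∑ j ∈ Finset.range m, ψ j * ψ j) + ψ m * ψ m := Finset.sum_range_succ _ m
  have e4 : ∑ j ∈ Finset.range (m+1), ψ j * ψ j
      = (∑ j ∈ Finset.range m, ψ (j+1) * ψ (j+1)) + ψ 0 * ψ 0 := Finset.sum_range_succ' _ m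
  have expand : ∑ j ∈ Finset.range (m+1), ((m:ℝ)+1)^2 * (N j - 2*ψ j + P j) * ψ j
      = ((m:ℝ)+1)^2 * ((∑ j ∈ Finset.range (m+1), N j * ψ j)
          - ((∑ j ∈ Finset.range (m+1), ψ j * ψ j) + (∑ j ∈ Finset.range (m+1), ψ j * ψ j))
          + (∑ j ∈ Finset.range (m+1), P j * ψ j)) := by
    rw [← Finset.sum_add_distrib, ← Finset.sum_sub_distrib, ← Finset.sum_add_distrib,
      Finset.mul_sum]
    apply Finset.sum_congr rfl
    intro j _
    ring
  have sq_expand : ∑ j ∈ Finset.range m, (((m:ℝ)+1)*(ψ (j+1) - ψ j))^2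
      = ((m:ℝ)+1)^2 * ((∑ j ∈ Finset.range m, ψ (j+1) * ψ (j+1))
          - 2 * (∑ j ∈ Finset.range m, ψ (j+1) * ψ j)
          + (∑ j ∈ Finset.range m, ψ j * ψ j)) := by
    rw [Finset.mul_sum, ← Finset.mul_sum, Finset.mul_sum, ← Finset.sum_sub_distrib,
      ← Finset.sum_add_distrib, Finset.mul_sum]
    apply Finset.sum_congr rfl
    intro j _
    ring
  have comm : ∑ j ∈ Finset.range m, ψ j * ψ (j+1) = ∑ j ∈ Finset.range m, ψ (j+1) * ψ j :=
    Finset.sum_congr rfl (fun j _ => mul_comm _ _)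
  rw [expand, sq_expand, e1, e2, comm]
  nth_rewrite 1 [e3]
  rw [e4]
  ring

set_option maxHeartbeats 1000000 in
lemma lam_lower (n : ℕ) (hn : 1 < n) (i : Fin n) (hi : (i:ℕ) ≠ 0) :
    4 ≤ -dLam n i := by
  have hn0 : (0:ℝ) < n := by positivity
  have hπ := Real.pi_pos
  have hπu : Real.pi < 3.15 := Real.pi_lt_d2
  have hπl : 3.141592 < Real.pi := Real.pi_gt_d6
  have hn2 : (2:ℝ) ≤ n := by exact_mod_cast hn
  have hx0 : 0 < Real.pi/(2*n) := by positivity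
  have hx1 : Real.pi/(2*n) ≤ 1 := by
    rw [div_le_one (by positivity)]; nlinarith
  have hs : Real.pi/(2*n) - (Real.pi/(2*n))^3/4 < Real.sin (Real.pi/(2*n)) := by
    have := Real.sin_gt_sub_cube hx0; linarith [pow_pos hx0 3]
  have hnx : (n:ℝ) * (Real.pi/(2*n)) = Real.pi/2 := by field_simp
  have hπ2 : Real.pi^2 < 9.9225 := by nlinarith
  have hπ3 : Real.pi^3 < 31.3 := by nlinarith
  have hx3 : (n:ℝ) * (Real.pi/(2*n))^3 ≤ Real.pi^3/32 := by
    have h1 : (Real.pi/(2*n))^3 = Real.pi^3/(8*(n:ℝ)^3) := by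
      rw [div_pow]; ring_nf
    rw [h1]
    have h2 : (n:ℝ) * (Real.pi^3/(8*(n:ℝ)^3)) = Real.pi^3/(8*(n:ℝ)^2) := by
      field_simp
    rw [h2, div_le_div_iff₀ (by positivity) (by norm_num)]
    nlinarith [pow_pos hπ 3, sq_nonneg ((n:ℝ)-2)]
  have h1 : 1 ≤ (n:ℝ) * Real.sin (Real.pi/(2*n)) := by
    have hmul : (n:ℝ) * (Real.pi/(2*n) - (Real.pi/(2*n))^3/4) ≤ (n:ℝ) * Real.sin (Real.pi/(2*n)) :=
      mul_le_mul_of_nonneg_left (le_of_lt hs) (le_of_lt hn0)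
    have hexp : (n:ℝ) * (Real.pi/(2*n) - (Real.pi/(2*n))^3/4)
        = Real.pi/2 - ((n:ℝ) * (Real.pi/(2*n))^3)/4 := by
      rw [mul_sub, hnx]; ring
    rw [hexp] at hmul
    nlinarith
  have hmono : Real.sin (Real.pi/(2*n)) ≤ Real.sin ((i:ℝ)*Real.pi/(2*n)) := by
    have h1i : (1:ℝ) ≤ (i:ℕ) := by exact_mod_cast Nat.one_le_iff_ne_zero.mpr hi
    have hiln : ((i:ℕ):ℝ) ≤ (n:ℝ) - 1 := by
      have : (i:ℕ) ≤ n - 1 := by omega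
      have := (Nat.cast_le (α := ℝ)).mpr this
      push_cast [Nat.cast_sub (by omega : 1 ≤ n)] at this
      linarith
    apply Real.strictMonoOn_sin.monotoneOn _ _ _
    · constructor
      · nlinarith
      · rw [div_le_iff₀ (by positivity)]; nlinarith
    · constructor
      · have : 0 ≤ (i:ℝ)*Real.pi/(2*n) := by positivity
        nlinarith
      · rw [div_le_iff₀ (by positivity)]; nlinarith
    · rw [div_le_div_iff₀ (by positivity) (by positivity)]
      nlinarith [mul_nonneg (mul_nonneg (sub_nonneg.mpr h1i) hπ.le) hn0.le]
  have h2 : 1 ≤ (n:ℝ) * Real.sin ((i:ℝ)*Real.pi/(2*n)) := by nlinarith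
  unfold dLam
  nlinarith [h2]

/-- next-index map -/
def nxt (n : ℕ) (j : Fin n) : Fin n :=
  if h : (j:ℕ)+1 < n then ⟨(j:ℕ)+1, h⟩ else j

/-- previous-index map -/
def prv (n : ℕ) (j : Fin n) : Fin n :=
  if 0 < (j:ℕ) then ⟨(j:ℕ)-1, Nat.lt_of_le_of_lt (Nat.sub_le _ _) j.isLt⟩ else j

lemma dLap_eq (n : ℕ) (u : Fin n → ℝ) (j : Fin n) :
    dLap n u j = (n:ℝ)^2 * (u (nxt n j) - 2*u j + u (prv n j)) := by
  unfold dLap nxt prv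
  rw [apply_dite u, apply_ite u]

lemma swap_inner (n : ℕ) (F : Finset (Fin n)) (a v : Fin n → ℝ) :
    ∑ j : Fin n, (∑ i ∈ F, a i * dPsi n i j) * v j
      = ∑ i ∈ F, a i * (∑ j : Fin n, dPsi n i j * v j) := by
  have h1 : ∀ j : Fin n, (∑ i ∈ F, a i * dPsi n i j) * v j
      = ∑ i ∈ F, a i * (dPsi n i j * v j) := by
    intro j
    rw [Finset.sum_mul]
    exact Finset.sum_congr rfl (fun i _ => by ring)
  rw [Finset.sum_congr rfl (fun j _ => h1 j), Finset.sum_comm]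
  exact Finset.sum_congr rfl (fun i _ => (Finset.mul_sum _ _ _).symm)

lemma inner_psi (n : ℕ) (hn : 1 < n) (a : Fin n → ℝ) (i : Fin n) (hi : (i:ℕ) ≠ 0) :
    ∑ j : Fin n,
        (∑ i' ∈ Finset.univ.filter (fun i' : Fin n => (i':ℕ) ≠ 0), a i' * dPsi n i' j)
          * dPsi n i j
      = a i * (1/2) := by
  rw [swap_inner]
  rw [Finset.sum_congr rfl (fun i' hi' => by
    rw [dPsi_ortho n (by omega) i' i (Finset.mem_filter.mp hi').2 hi])]
  rw [Finset.sum_eq_single i (fun b _ hb => by rw [if_neg hb, mul_zero])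
    (fun h => absurd (Finset.mem_filter.mpr ⟨Finset.mem_univ i, hi⟩) h), if_pos rfl]

set_option maxHeartbeats 1000000 in
/-- Operator norm bound `‖G ∘ L⁻¹‖ ≤ 1/4` for `n > 1`. -/
theorem stmt8 (n : ℕ) (hn : 1 < n) (f : Fin n → ℝ) :
    Real.sqrt (∑ j, (dGrad n (dLapInv n f) j) ^ 2) ≤
      (1 / 4) * Real.sqrt (∑ j, (f j) ^ 2) := by
  have hn0 : 0 < n := by omega
  set F : Finset (Fin n) := Finset.univ.filter (fun i : Fin n => (i : ℕ) ≠ 0) with hF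
  set c : Fin n → ℝ := fun i => ∑ k, f k * dPsi n i k with hc
  have hφdef : ∀ x : Fin n, dLapInv n f x = ∑ i ∈ F, (1/dLam n i) * c i * dPsi n i x :=
    fun x => rfl
  have hFmem : ∀ i ∈ F, (i:ℕ) ≠ 0 := fun i hi => (Finset.mem_filter.mp hi).2
  have hlam : ∀ i ∈ F, dLam n i ≠ 0 := by
    intro i hi
    have := lam_lower n hn i (hFmem i hi)
    intro h; rw [h] at this; norm_num at this
  -- L applied to dLapInv f
  have hLφ : ∀ j, dLap n (dLapInv n f) j = ∑ i ∈ F, c i * dPsi n i j := by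
    intro j
    rw [dLap_eq]
    rw [hφdef (nxt n j), hφdef (prv n j), hφdef j]
    rw [show (2:ℝ) * ∑ i ∈ F, 1/dLam n i * c i * dPsi n i j
        = ∑ i ∈ F, 2*(1/dLam n i * c i * dPsi n i j) from Finset.mul_sum _ _ _]
    rw [← Finset.sum_sub_distrib, ← Finset.sum_add_distrib, Finset.mul_sum]
    apply Finset.sum_congr rfl
    intro i hi
    have hd := dLap_dPsi n hn i j
    rw [dLap_eq] at hd
    have hne := hlam i hi
    have hone : (1:ℝ)/dLam n i * dLam n i = 1 := by field_simp
    linear_combination (1/dLam n i * c i) * hd + (c i * dPsi n i j) * hone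
  -- inner product ⟨ψ_i, dLapInv f⟩
  have hpsiphi : ∀ i ∈ F, ∑ j : Fin n, dPsi n i j * dLapInv n f j
      = (1/dLam n i) * c i * (1/2) := by
    intro i hi
    have h1 : ∀ j : Fin n, dPsi n i j * dLapInv n f j
        = (∑ i' ∈ F, (1/dLam n i') * c i' * dPsi n i' j) * dPsi n i j := by
      intro j; rw [← hφdef j]; ring
    rw [Finset.sum_congr rfl (fun j _ => h1 j)]
    exact inner_psi n hn (fun i' => (1/dLam n i') * c i') i (hFmem i hi)
  -- energy identity
  have hG2 : ∑ j : Fin (n-1), (dGrad n (dLapInv n f) j)^2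
      = ∑ i ∈ F, -((c i)^2 * (1/dLam n i) / 2) := by
    rw [parts n hn (dLapInv n f)]
    rw [Finset.sum_congr rfl (fun j _ => by rw [hLφ j])]
    rw [swap_inner n F c (dLapInv n f)]
    rw [← Finset.sum_neg_distrib]
    apply Finset.sum_congr rfl
    intro i hi
    rw [hpsiphi i hi]
    ring
  -- Bessel inequality
  set g : Fin n → ℝ := fun j => ∑ i ∈ F, (2 * c i) * dPsi n i j with hg
  have hfg : ∑ j : Fin n, g j * f j = ∑ i ∈ F, (2 * c i) * c i := by
    rw [swap_inner n F (fun i => 2 * c i) f]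
    apply Finset.sum_congr rfl
    intro i _
    congr 1
    exact Finset.sum_congr rfl (fun k _ => mul_comm _ _)
  have hgg : ∑ j : Fin n, g j * g j = ∑ i ∈ F, (2 * c i) * c i := by
    rw [swap_inner n F (fun i => 2 * c i) g]
    apply Finset.sum_congr rfl
    intro i hi
    congr 1
    have h1 : ∀ j : Fin n, dPsi n i j * g j
        = (∑ i' ∈ F, (2 * c i') * dPsi n i' j) * dPsi n i j := by
      intro j; rw [hg]; ring
    rw [Finset.sum_congr rfl (fun j _ => h1 j)]
    rw [inner_psi n hn (fun i' => 2 * c i') i (hFmem i hi)]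
    ring
  have bessel : ∑ i ∈ F, (c i)^2 ≤ (∑ j : Fin n, (f j)^2) / 2 := by
    have h0 : (0:ℝ) ≤ ∑ j : Fin n, (f j - g j)^2 :=
      Finset.sum_nonneg (fun j _ => sq_nonneg _)
    have hexp : ∑ j : Fin n, (f j - g j)^2
        = ∑ j : Fin n, (f j)^2 - 2 * (∑ j : Fin n, g j * f j) + ∑ j : Fin n, g j * g j := by
      rw [Finset.mul_sum, ← Finset.sum_sub_distrib, ← Finset.sum_add_distrib]
      exact Finset.sum_congr rfl (fun j _ => by ring)
    rw [hexp, hfg, hgg] at h0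
    have hcc : ∑ i ∈ F, (2 * c i) * c i = 2 * ∑ i ∈ F, (c i)^2 := by
      rw [Finset.mul_sum]
      exact Finset.sum_congr rfl (fun i _ => by ring)
    rw [hcc] at h0
    linarith
  -- combine
  have hterm : ∀ i ∈ F, -((c i)^2 * (1/dLam n i) / 2) ≤ (c i)^2 / 8 := by
    intro i hi
    have h4 := lam_lower n hn i (hFmem i hi)
    have hpos : (0:ℝ) < -dLam n i := by linarith
    have hinv : 1/(-dLam n i) ≤ 1/4 := by
      rw [div_le_div_iff₀ hpos (by norm_num)]; linarith
    have heq : -((c i)^2 * (1/dLam n i) / 2) = (c i)^2 * (1/(-dLam n i)) / 2 := by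
      rw [div_neg, one_div]
      ring
    rw [heq]
    have := sq_nonneg (c i)
    nlinarith
  have hmain : ∑ j : Fin (n-1), (dGrad n (dLapInv n f) j)^2
      ≤ (1/4:ℝ)^2 * ∑ j : Fin n, (f j)^2 := by
    rw [hG2]
    calc ∑ i ∈ F, -((c i)^2 * (1/dLam n i) / 2) ≤ ∑ i ∈ F, (c i)^2 / 8 :=
          Finset.sum_le_sum hterm
      _ = (∑ i ∈ F, (c i)^2) / 8 := by rw [Finset.sum_div]
      _ ≤ ((∑ j : Fin n, (f j)^2) / 2) / 8 := by linarith
      _ = (1/4:ℝ)^2 * ∑ j : Fin n, (f j)^2 := by ring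
  calc Real.sqrt (∑ j, (dGrad n (dLapInv n f) j) ^ 2)
      ≤ Real.sqrt ((1/4:ℝ)^2 * ∑ j : Fin n, (f j)^2) := Real.sqrt_le_sqrt hmain
    _ = (1/4) * Real.sqrt (∑ j, (f j)^2) := by
        rw [Real.sqrt_mul (by norm_num), Real.sqrt_sq (by norm_num)]
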